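/- Let R be a Γ-graded integral domain and ⋆ a homogeneous star operation on R. Then the finite-type star operation associated to e(⋆) agrees with the finite-type homogeneous star operation ⋆_f on homogeneous fractional ideals: for every nonzero homogeneous fractional ideal A of R, A^{(e(⋆))_f} = A^{⋆_f}, where A^{⋆_f} = ⋃ { B^⋆ : B ⊆ A finitely generated homogeneous } and A^{(e(⋆))_f} = ⋃ { B^{e(⋆)} : B ⊆ A finitely generated }. -/

import Mathlib

open FractionalIdeal
open scoped Classical

section Setup

variable {Γ : Type*} [AddCommMonoid Γ] [LinearOrder Γ] [IsOrderedCancelAddMonoid Γ] [DecidableEq Γ]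
  {R : Type*} [CommRing R] [IsDomain R]
  (𝒜 : Γ → AddSubgroup R) [GradedRing 𝒜]
  (K : Type*) [Field K] [Algebra R K] [IsFractionRing R K]

/-- The integral ideal corresponding to a fractional ideal contained in `R`. -/
def idealOf (J : FractionalIdeal (nonZeroDivisors R) K) : Ideal R :=
  (J : Submodule R K).comap (Algebra.linearMap R K)

/-- An integral ideal is homogeneous if it contains all homogeneous components of its elements. -/
def IsHomIdeal (I : Ideal R) : Prop := ∀ f ∈ I, ∀ γ : Γ, GradedRing.proj 𝒜 γ f ∈ I

/-- `C(I)`: the homogeneous ideal generated by the homogeneous components of elements of `I`. -/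
def homC (I : Ideal R) : Ideal R :=
  Ideal.span {x | ∃ f ∈ I, ∃ γ : Γ, x = GradedRing.proj 𝒜 γ f}

/-- `C(J)` for a fractional ideal `J ⊆ R`, as a fractional ideal. -/
def Cfrac (J : FractionalIdeal (nonZeroDivisors R) K) : FractionalIdeal (nonZeroDivisors R) K :=
  ↑(homC 𝒜 (idealOf K J))

/-- A fractional ideal is homogeneous if some nonzero homogeneous `s ∈ R` multiplies it into a
homogeneous integral ideal. -/
def IsHomFrac (A : FractionalIdeal (nonZeroDivisors R) K) : Prop :=
  ∃ s : R, s ≠ 0 ∧ SetLike.IsHomogeneousElem 𝒜 s ∧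
    spanSingleton (nonZeroDivisors R) (algebraMap R K s) * A ≤ 1 ∧
    IsHomIdeal 𝒜 (idealOf K (spanSingleton (nonZeroDivisors R) (algebraMap R K s) * A))

/-- A homogeneous element of the homogeneous quotient field, viewed inside `K`. -/
def IsHomElem (x : K) : Prop :=
  ∃ a b : R, SetLike.IsHomogeneousElem 𝒜 a ∧ SetLike.IsHomogeneousElem 𝒜 b ∧ b ≠ 0 ∧
    x * algebraMap R K b = algebraMap R K a

end Setup

/-- A homogeneous star operation on the graded domain `R`. -/
structure HomStarOp {Γ : Type*} [AddCommMonoid Γ] [LinearOrder Γ] [IsOrderedCancelAddMonoid Γ] [DecidableEq Γ]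
    {R : Type*} [CommRing R] [IsDomain R] (𝒜 : Γ → AddSubgroup R) [GradedRing 𝒜]
    (K : Type*) [Field K] [Algebra R K] [IsFractionRing R K] where
  toFun : FractionalIdeal (nonZeroDivisors R) K → FractionalIdeal (nonZeroDivisors R) K
  hom : ∀ A, A ≠ 0 → IsHomFrac 𝒜 K A → IsHomFrac 𝒜 K (toFun A)
  map_span : ∀ x : K, x ≠ 0 → IsHomElem 𝒜 K x →
    toFun (spanSingleton (nonZeroDivisors R) x) = spanSingleton (nonZeroDivisors R) x
  map_smul : ∀ x : K, x ≠ 0 → IsHomElem 𝒜 K x → ∀ A, A ≠ 0 → IsHomFrac 𝒜 K A →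
    toFun (spanSingleton (nonZeroDivisors R) x * A) = spanSingleton (nonZeroDivisors R) x * toFun A
  le_star : ∀ A, A ≠ 0 → IsHomFrac 𝒜 K A → A ≤ toFun A
  mono : ∀ A B, A ≠ 0 → B ≠ 0 → IsHomFrac 𝒜 K A → IsHomFrac 𝒜 K B → A ≤ B → toFun A ≤ toFun B
  idem : ∀ A, A ≠ 0 → IsHomFrac 𝒜 K A → toFun (toFun A) = toFun A

/-- A classical star operation on the domain `R`. -/
structure StarOp (R : Type*) [CommRing R] [IsDomain R]
    (K : Type*) [Field K] [Algebra R K] [IsFractionRing R K] where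
  toFun : FractionalIdeal (nonZeroDivisors R) K → FractionalIdeal (nonZeroDivisors R) K
  map_span : ∀ x : K, x ≠ 0 →
    toFun (spanSingleton (nonZeroDivisors R) x) = spanSingleton (nonZeroDivisors R) x
  map_smul : ∀ x : K, x ≠ 0 → ∀ A, A ≠ 0 →
    toFun (spanSingleton (nonZeroDivisors R) x * A) = spanSingleton (nonZeroDivisors R) x * toFun A
  le_star : ∀ A, A ≠ 0 → A ≤ toFun A
  mono : ∀ A B, A ≠ 0 → B ≠ 0 → A ≤ B → toFun A ≤ toFun B
  idem : ∀ A, A ≠ 0 → toFun (toFun A) = toFun A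

section EStar

variable {Γ : Type*} [AddCommMonoid Γ] [LinearOrder Γ] [IsOrderedCancelAddMonoid Γ] [DecidableEq Γ]
  {R : Type*} [CommRing R] [IsDomain R]
  (𝒜 : Γ → AddSubgroup R) [GradedRing 𝒜]
  (K : Type*) [Field K] [Algebra R K] [IsFractionRing R K]

/-- The submodule `⋂ { z⁻¹ (C(zA))^⋆ : 0 ≠ z ∈ (R : A) }`. -/
def eStarSub (s : HomStarOp 𝒜 K) (A : FractionalIdeal (nonZeroDivisors R) K) : Submodule R K :=
  ⨅ z ∈ {z : K | z ≠ 0 ∧ spanSingleton (nonZeroDivisors R) z * A ≤ 1},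
    ↑(spanSingleton (nonZeroDivisors R) z⁻¹ *
      s.toFun (Cfrac 𝒜 K (spanSingleton (nonZeroDivisors R) z * A)))

/-- The extension `e(⋆)` of a homogeneous star operation `⋆`,
`A^{e(⋆)} := ⋂ { z⁻¹ (C(zA))^⋆ : 0 ≠ z ∈ (R : A) }` (which is a fractional ideal whenever
`A` is a nonzero fractional ideal). -/
noncomputable def eStar (s : HomStarOp 𝒜 K) (A : FractionalIdeal (nonZeroDivisors R) K) :
    FractionalIdeal (nonZeroDivisors R) K :=
  if h : IsFractional (nonZeroDivisors R) (eStarSub 𝒜 K s A) then ⟨_, h⟩ else 0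

end EStar


/-- `A^{★_f}` as a set: the union of `B^★` over finitely generated `B ⊆ A`. -/
def finTypeSet {R : Type*} [CommRing R] [IsDomain R]
    (K : Type*) [Field K] [Algebra R K] [IsFractionRing R K]
    (t : FractionalIdeal (nonZeroDivisors R) K → FractionalIdeal (nonZeroDivisors R) K)
    (A : FractionalIdeal (nonZeroDivisors R) K) : Set K :=
  ⋃ B ∈ {B : FractionalIdeal (nonZeroDivisors R) K |
      B ≠ 0 ∧ B ≤ A ∧ (B : Submodule R K).FG}, {x : K | x ∈ t B}

/-- `A^{⋆_f}` as a set: the union of `B^⋆` over finitely generated homogeneous `B ⊆ A`. -/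
def homFinTypeSet {Γ : Type*} [AddCommMonoid Γ] [LinearOrder Γ] [IsOrderedCancelAddMonoid Γ] [DecidableEq Γ]
    {R : Type*} [CommRing R] [IsDomain R]
    (𝒜 : Γ → AddSubgroup R) [GradedRing 𝒜]
    (K : Type*) [Field K] [Algebra R K] [IsFractionRing R K]
    (t : FractionalIdeal (nonZeroDivisors R) K → FractionalIdeal (nonZeroDivisors R) K)
    (A : FractionalIdeal (nonZeroDivisors R) K) : Set K :=
  ⋃ B ∈ {B : FractionalIdeal (nonZeroDivisors R) K |
      B ≠ 0 ∧ B ≤ A ∧ IsHomFrac 𝒜 K B ∧ (B : Submodule R K).FG}, {x : K | x ∈ t B}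

set_option linter.unusedSectionVars false
set_option linter.unusedVariables false

section Helpers

open DirectSum

variable {Γ : Type*} [AddCommMonoid Γ] [LinearOrder Γ] [IsOrderedCancelAddMonoid Γ] [DecidableEq Γ]
  {R : Type*} [CommRing R] [IsDomain R]
  (𝒜 : Γ → AddSubgroup R) [GradedRing 𝒜]
  (K : Type*) [Field K] [Algebra R K] [IsFractionRing R K]

instance : AddCancelCommMonoid Γ :=
  { (inferInstance : AddCommMonoid Γ) with add_left_cancel := fun a b c h => add_left_cancel h }

lemma isHomIdeal_iff {I : Ideal R} : IsHomIdeal 𝒜 I ↔ Ideal.IsHomogeneous 𝒜 I :=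
  ⟨fun h i r hr => h r hr i, fun h r hr i => h i hr⟩

lemma homC_eq (I : Ideal R) : homC 𝒜 I = (Ideal.homogeneousHull 𝒜 I).toIdeal := by
  unfold homC Ideal.homogeneousHull
  congr 1
  ext x
  constructor
  · rintro ⟨f, hf, γ, rfl⟩; exact ⟨γ, ⟨f, hf⟩, rfl⟩
  · rintro ⟨γ, ⟨f, hf⟩, rfl⟩; exact ⟨f, hf, γ, rfl⟩

lemma le_homC (I : Ideal R) : I ≤ homC 𝒜 I := by
  rw [homC_eq]; exact Ideal.le_toIdeal_homogeneousHull 𝒜 I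

lemma isHomIdeal_homC (I : Ideal R) : IsHomIdeal 𝒜 (homC 𝒜 I) := by
  rw [isHomIdeal_iff, homC_eq]; exact (Ideal.homogeneousHull 𝒜 I).isHomogeneous

lemma homC_le {I J : Ideal R} (hIJ : I ≤ J) (hJ : IsHomIdeal 𝒜 J) : homC 𝒜 I ≤ J := by
  rw [homC_eq]
  calc (Ideal.homogeneousHull 𝒜 I).toIdeal ≤ (Ideal.homogeneousHull 𝒜 J).toIdeal :=
        Ideal.homogeneousHull_mono 𝒜 hIJ
    _ = J := ((isHomIdeal_iff 𝒜).1 hJ).toIdeal_homogeneousHull_eq_self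

lemma proj_mul_eq_zero_of_ne {d : Γ} {v : R} (hv : v ∈ 𝒜 d) (w : R) (μ : Γ)
    (h : ∀ δ, μ ≠ d + δ) : GradedRing.proj 𝒜 μ (v * w) = 0 := by
  induction w using DirectSum.Decomposition.inductionOn 𝒜 with
  | zero => simp
  | @homogeneous δ m =>
      rw [GradedRing.proj_apply,
        DirectSum.decompose_of_mem_ne 𝒜 (SetLike.mul_mem_graded hv m.2) (Ne.symm (h δ))]
  | add w₁ w₂ h1 h2 => rw [mul_add, _root_.map_add, h1, h2, add_zero]

lemma proj_mul_mem (r f : R) (γ : Γ) :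
    GradedRing.proj 𝒜 γ (r * f) ∈ Ideal.span (Set.range fun δ : Γ => GradedRing.proj 𝒜 δ f) := by
  induction r using DirectSum.Decomposition.inductionOn 𝒜 with
  | zero => simp
  | @homogeneous β m =>
      have hrw : (↑m : R) * f
          = ∑ δ ∈ (decompose 𝒜 f).support, (↑m : R) * (decompose 𝒜 f δ : R) := by
        rw [← Finset.mul_sum, DirectSum.sum_support_decompose]
      rw [hrw, _root_.map_sum]
      refine Ideal.sum_mem _ fun δ _ => ?_
      rw [GradedRing.proj_apply]
      by_cases h : β + δ = γ
      · rw [← h, DirectSum.decompose_of_mem_same 𝒜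
          (SetLike.mul_mem_graded m.2 (decompose 𝒜 f δ).2)]
        have : ((decompose 𝒜 f δ : R)) ∈ Ideal.span (Set.range fun δ : Γ => GradedRing.proj 𝒜 δ f) :=
          Ideal.subset_span ⟨δ, rfl⟩
        exact Ideal.mul_mem_left _ _ this
      · rw [DirectSum.decompose_of_mem_ne 𝒜
          (SetLike.mul_mem_graded m.2 (decompose 𝒜 f δ).2) h]
        exact zero_mem _
  | add r₁ r₂ h1 h2 => rw [add_mul, _root_.map_add]; exact add_mem h1 h2

lemma homC_fg {I : Ideal R} (hI : I.FG) : (homC 𝒜 I).FG := by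
  obtain ⟨T, rfl⟩ := hI
  classical
  set S : Set R := ⋃ t ∈ (T : Set R), (fun δ : Γ => GradedRing.proj 𝒜 δ t) ''
      ((decompose 𝒜 t).support : Set Γ) with hS
  have hSfin : S.Finite :=
    Set.Finite.biUnion T.finite_toSet fun t _ => (Set.toFinite _).image _
  have key : ∀ f ∈ Ideal.span (T : Set R), ∀ γ : Γ, GradedRing.proj 𝒜 γ f ∈ Ideal.span S := by
    intro f hf
    refine Submodule.span_induction ?_ ?_ ?_ ?_ hf
    · intro t ht γ
      by_cases hγ : γ ∈ (decompose 𝒜 t).support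
      · exact Ideal.subset_span (Set.mem_biUnion ht ⟨γ, hγ, rfl⟩)
      · rw [GradedRing.proj_apply, DFinsupp.notMem_support_iff.1 hγ]
        exact zero_mem _
    · intro γ; simp
    · intro a b _ _ ha hb γ
      rw [_root_.map_add]; exact add_mem (ha γ) (hb γ)
    · intro r a _ ha γ
      rw [smul_eq_mul]
      refine Ideal.span_le.2 ?_ (proj_mul_mem 𝒜 r a γ)
      rintro _ ⟨δ, rfl⟩
      exact ha δ
  have : homC 𝒜 (Ideal.span (T : Set R)) = Ideal.span S := by
    apply le_antisymm
    · rw [homC, Ideal.span_le]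
      rintro _ ⟨f, hf, γ, rfl⟩
      exact key f hf γ
    · rw [Ideal.span_le]
      intro x hx
      rw [hS] at hx
      obtain ⟨t, ht, δ, _, rfl⟩ := Set.mem_iUnion₂.1 hx
      exact Ideal.subset_span ⟨t, Ideal.subset_span ht, δ, rfl⟩
  rw [this]
  exact Submodule.fg_span hSfin



lemma mem_idealOf {J : FractionalIdeal (nonZeroDivisors R) K} {r : R} :
    r ∈ idealOf K J ↔ algebraMap R K r ∈ J := Iff.rfl

lemma idealOf_coeIdeal (I : Ideal R) :
    idealOf K (I : FractionalIdeal (nonZeroDivisors R) K) = I := by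
  ext r
  rw [mem_idealOf, FractionalIdeal.mem_coeIdeal]
  constructor
  · rintro ⟨x, hx, he⟩
    rwa [IsFractionRing.injective R K he] at hx
  · intro h; exact ⟨r, h, rfl⟩

lemma coeIdeal_idealOf {J : FractionalIdeal (nonZeroDivisors R) K} (h : J ≤ 1) :
    (↑(idealOf K J) : FractionalIdeal (nonZeroDivisors R) K) = J := by
  obtain ⟨I, rfl⟩ := FractionalIdeal.le_one_iff_exists_coeIdeal.1 h
  rw [idealOf_coeIdeal]

lemma isHomElem_algebraMap {r : R} (hr : SetLike.IsHomogeneousElem 𝒜 r) :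
    IsHomElem 𝒜 K (algebraMap R K r) :=
  ⟨r, 1, hr, ⟨0, SetLike.one_mem_graded 𝒜⟩, one_ne_zero, by simp⟩

lemma IsHomElem.inv {x : K} (hx : x ≠ 0) (h : IsHomElem 𝒜 K x) : IsHomElem 𝒜 K x⁻¹ := by
  obtain ⟨a, b, ha, hb, hb0, he⟩ := h
  have ha0 : a ≠ 0 := by
    rintro rfl
    rw [_root_.map_zero] at he
    exact hx (by
      have hbK : algebraMap R K b ≠ 0 := fun h0 =>
        hb0 (IsFractionRing.injective R K (by rw [h0, _root_.map_zero]))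
      exact (mul_eq_zero.1 he).resolve_right hbK)
  refine ⟨b, a, hb, ha, ha0, ?_⟩
  have hxK : x ≠ 0 := hx
  rw [← he]
  field_simp

lemma IsHomElem.mul {x y : K} (hx : IsHomElem 𝒜 K x) (hy : IsHomElem 𝒜 K y) :
    IsHomElem 𝒜 K (x * y) := by
  obtain ⟨a₁, b₁, ha₁, hb₁, hb₁0, he₁⟩ := hx
  obtain ⟨a₂, b₂, ha₂, hb₂, hb₂0, he₂⟩ := hy
  refine ⟨a₁ * a₂, b₁ * b₂, SetLike.IsHomogeneousElem.mul ha₁ ha₂, SetLike.IsHomogeneousElem.mul hb₁ hb₂, mul_ne_zero hb₁0 hb₂0, ?_⟩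
  rw [_root_.map_mul, _root_.map_mul]
  calc x * y * (algebraMap R K b₁ * algebraMap R K b₂)
      = (x * algebraMap R K b₁) * (y * algebraMap R K b₂) := by ring
    _ = _ := by rw [he₁, he₂]

lemma algebraMap_ne_zero {r : R} (hr : r ≠ 0) : algebraMap R K r ≠ 0 := fun h0 =>
  hr (IsFractionRing.injective R K (by rw [h0, _root_.map_zero]))

lemma spanSingleton_mul_ne_zero {x : K} (hx : x ≠ 0)
    {J : FractionalIdeal (nonZeroDivisors R) K} (hJ : J ≠ 0) :
    spanSingleton (nonZeroDivisors R) x * J ≠ 0 := by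
  obtain ⟨b, hb0, hbJ⟩ := FractionalIdeal.exists_ne_zero_mem_isInteger hJ
  intro h0
  have : x * algebraMap R K b ∈ spanSingleton (nonZeroDivisors R) x * J :=
    FractionalIdeal.mem_singleton_mul.2 ⟨_, hbJ, rfl⟩
  rw [h0, FractionalIdeal.mem_zero_iff] at this
  exact mul_ne_zero hx (algebraMap_ne_zero K hb0) this



lemma isHomFrac_coeIdeal {I : Ideal R} (hI : IsHomIdeal 𝒜 I) :
    IsHomFrac 𝒜 K (I : FractionalIdeal (nonZeroDivisors R) K) := by
  refine ⟨1, one_ne_zero, ⟨0, SetLike.one_mem_graded 𝒜⟩, ?_, ?_⟩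
  · rw [_root_.map_one, spanSingleton_one, one_mul]
    exact FractionalIdeal.coeIdeal_le_one
  · rw [_root_.map_one, spanSingleton_one, one_mul, idealOf_coeIdeal]
    exact hI

lemma Cfrac_le_one (J : FractionalIdeal (nonZeroDivisors R) K) : Cfrac 𝒜 K J ≤ 1 :=
  FractionalIdeal.coeIdeal_le_one

lemma isHomFrac_Cfrac (J : FractionalIdeal (nonZeroDivisors R) K) :
    IsHomFrac 𝒜 K (Cfrac 𝒜 K J) :=
  isHomFrac_coeIdeal 𝒜 K (isHomIdeal_homC 𝒜 _)

lemma Cfrac_ne_zero {z : K} (hz : z ≠ 0) {B : FractionalIdeal (nonZeroDivisors R) K}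
    (hB : B ≠ 0) : Cfrac 𝒜 K (spanSingleton (nonZeroDivisors R) z * B) ≠ 0 := by
  have h1 : spanSingleton (nonZeroDivisors R) z * B ≠ 0 := spanSingleton_mul_ne_zero K hz hB
  obtain ⟨b, hb0, hbJ⟩ := FractionalIdeal.exists_ne_zero_mem_isInteger h1
  rw [Cfrac]
  rw [Ne, FractionalIdeal.coeIdeal_eq_zero]
  intro h0
  have : b ∈ homC 𝒜 (idealOf K (spanSingleton (nonZeroDivisors R) z * B)) :=
    le_homC 𝒜 _ ((mem_idealOf K).2 hbJ)
  rw [h0] at this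
  exact hb0 this

lemma le_Cfrac {J : FractionalIdeal (nonZeroDivisors R) K} (hJ : J ≤ 1) : J ≤ Cfrac 𝒜 K J := by
  conv_lhs => rw [← coeIdeal_idealOf K hJ]
  exact FractionalIdeal.coeIdeal_le_coeIdeal K |>.2 (le_homC 𝒜 _)

/-- A nonzero homogeneous fractional ideal contains a nonzero homogeneous element. -/
lemma exists_hom_elem {B : FractionalIdeal (nonZeroDivisors R) K} (hB : B ≠ 0)
    (hhom : IsHomFrac 𝒜 K B) : ∃ a : K, a ∈ B ∧ a ≠ 0 ∧ IsHomElem 𝒜 K a := by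
  obtain ⟨t, ht0, htH, htle, htI⟩ := hhom
  have htK : algebraMap R K t ≠ 0 := algebraMap_ne_zero K ht0
  have h1 : spanSingleton (nonZeroDivisors R) (algebraMap R K t) * B ≠ 0 :=
    spanSingleton_mul_ne_zero K htK hB
  obtain ⟨w, hw0, hwJ⟩ := FractionalIdeal.exists_ne_zero_mem_isInteger h1
  have hwI : w ∈ idealOf K (spanSingleton (nonZeroDivisors R) (algebraMap R K t) * B) :=
    (mem_idealOf K).2 hwJ
  have : DirectSum.decompose 𝒜 w ≠ 0 := fun h => hw0 <| by
    have := (DirectSum.decomposeAddEquiv 𝒜).injective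
      (a₁ := w) (a₂ := 0) (by rw [_root_.map_zero]; exact h)
    exact this
  obtain ⟨γ, hγ⟩ := DFinsupp.ne_iff.1 this
  have hc0 : GradedRing.proj 𝒜 γ w ≠ 0 := by
    rw [GradedRing.proj_apply]
    intro h
    exact hγ (by rw [DFinsupp.zero_apply]; exact Subtype.ext h)
  set c := GradedRing.proj 𝒜 γ w with hc
  have hcI : c ∈ idealOf K (spanSingleton (nonZeroDivisors R) (algebraMap R K t) * B) :=
    htI w hwI γ
  have hcmem : algebraMap R K c ∈ spanSingleton (nonZeroDivisors R) (algebraMap R K t) * B := hcI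
  obtain ⟨a, haB, hae⟩ := FractionalIdeal.mem_singleton_mul.1 hcmem
  refine ⟨a, haB, ?_, ?_⟩
  · intro h; rw [h, mul_zero] at hae; exact algebraMap_ne_zero K hc0 hae.symm.symm
  · exact ⟨c, t, ⟨γ, by rw [hc, GradedRing.proj_apply]; exact (decompose 𝒜 w γ).2⟩, htH, ht0,
      by rw [mul_comm] at hae; rw [← hae]⟩

/-- Every element of a homogeneous fractional ideal is a finite sum of homogeneous
elements of that ideal. -/
lemma exists_sum_hom_elems {B : FractionalIdeal (nonZeroDivisors R) K}
    (hhom : IsHomFrac 𝒜 K B) {y : K} (hy : y ∈ B) :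
    ∃ (T : Finset Γ) (g : Γ → K), (∀ δ ∈ T, g δ ∈ B ∧ IsHomElem 𝒜 K (g δ)) ∧
      y = ∑ δ ∈ T, g δ := by
  obtain ⟨t, ht0, htH, htle, htI⟩ := hhom
  have htK : algebraMap R K t ≠ 0 := algebraMap_ne_zero K ht0
  have hty : algebraMap R K t * y ∈
      spanSingleton (nonZeroDivisors R) (algebraMap R K t) * B :=
    FractionalIdeal.mem_singleton_mul.2 ⟨y, hy, rfl⟩
  obtain ⟨w, hw⟩ := FractionalIdeal.mem_one_iff _ |>.1 (htle hty)
  have hwI : w ∈ idealOf K (spanSingleton (nonZeroDivisors R) (algebraMap R K t) * B) := by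
    rw [mem_idealOf, hw]; exact hty
  classical
  refine ⟨(DirectSum.decompose 𝒜 w).support,
    fun δ => (algebraMap R K t)⁻¹ * algebraMap R K (GradedRing.proj 𝒜 δ w), fun δ _ => ⟨?_, ?_⟩, ?_⟩
  · have hmem : algebraMap R K (GradedRing.proj 𝒜 δ w) ∈
        spanSingleton (nonZeroDivisors R) (algebraMap R K t) * B := htI w hwI δ
    obtain ⟨y', hy', he⟩ := FractionalIdeal.mem_singleton_mul.1 hmem
    show (algebraMap R K t)⁻¹ * algebraMap R K (GradedRing.proj 𝒜 δ w) ∈ B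
    rw [he, ← mul_assoc, inv_mul_cancel₀ htK, one_mul]
    exact hy'
  · exact ⟨GradedRing.proj 𝒜 δ w, t,
      ⟨δ, by rw [GradedRing.proj_apply]; exact (decompose 𝒜 w δ).2⟩, htH, ht0, by
        show (algebraMap R K t)⁻¹ * algebraMap R K (GradedRing.proj 𝒜 δ w) * algebraMap R K t = _
        field_simp⟩
  · have : y = (algebraMap R K t)⁻¹ * algebraMap R K w := by
      rw [hw]; field_simp
    rw [this, ← Finset.mul_sum]
    congr 1
    rw [← _root_.map_sum]
    congr 1
    exact (DirectSum.sum_support_decompose 𝒜 w).symm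



lemma isHomIdeal_span_singleton_mul {p : R} (hp : SetLike.IsHomogeneousElem 𝒜 p)
    {I : Ideal R} (hI : IsHomIdeal 𝒜 I) : IsHomIdeal 𝒜 (Ideal.span {p} * I) := by
  intro r hr γ
  obtain ⟨w, hw, rfl⟩ := Ideal.mem_span_singleton_mul.1 hr
  obtain ⟨d, hpd⟩ := hp
  by_cases h : ∃ δ : Γ, γ = d + δ
  · obtain ⟨δ, rfl⟩ := h
    rw [GradedRing.proj_apply, DirectSum.coe_decompose_mul_add_of_left_mem 𝒜 hpd]
    exact Ideal.mul_mem_mul (Ideal.mem_span_singleton_self p) (hI w hw δ)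
  · rw [proj_mul_eq_zero_of_ne 𝒜 hpd w γ (fun δ hδ => h ⟨δ, hδ⟩)]
    exact zero_mem _

lemma IsHomFrac.smul {x : K} (hx : x ≠ 0) (hxh : IsHomElem 𝒜 K x)
    {B : FractionalIdeal (nonZeroDivisors R) K} (hB : IsHomFrac 𝒜 K B) :
    IsHomFrac 𝒜 K (spanSingleton (nonZeroDivisors R) x * B) := by
  obtain ⟨p, q, hpH, hqH, hq0, hpq⟩ := hxh
  have hp0 : p ≠ 0 := by
    rintro rfl
    rw [_root_.map_zero] at hpq
    exact hx ((mul_eq_zero.1 hpq).resolve_right (algebraMap_ne_zero K hq0))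
  obtain ⟨t, ht0, htH, htle, htI⟩ := hB
  refine ⟨t * q, mul_ne_zero ht0 hq0, SetLike.IsHomogeneousElem.mul htH hqH, ?_⟩
  have key : spanSingleton (nonZeroDivisors R) (algebraMap R K (t * q)) *
      (spanSingleton (nonZeroDivisors R) x * B) =
      ((Ideal.span {p} * idealOf K (spanSingleton (nonZeroDivisors R) (algebraMap R K t) * B) :
        Ideal R) : FractionalIdeal (nonZeroDivisors R) K) := by
    rw [FractionalIdeal.coeIdeal_mul, FractionalIdeal.coeIdeal_span_singleton,
      coeIdeal_idealOf K htle, _root_.map_mul, ← spanSingleton_mul_spanSingleton]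
    rw [show spanSingleton (nonZeroDivisors R) (algebraMap R K t) *
        spanSingleton (nonZeroDivisors R) (algebraMap R K q) *
        (spanSingleton (nonZeroDivisors R) x * B) =
        spanSingleton (nonZeroDivisors R) (algebraMap R K q) *
        spanSingleton (nonZeroDivisors R) x *
        (spanSingleton (nonZeroDivisors R) (algebraMap R K t) * B) by ring]
    rw [spanSingleton_mul_spanSingleton, mul_comm (algebraMap R K q) x, hpq]
  constructor
  · rw [key]
    exact FractionalIdeal.coeIdeal_le_one
  · rw [key, idealOf_coeIdeal]
    exact isHomIdeal_span_singleton_mul 𝒜 hpH htI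

lemma mem_eStarSub_iff (s : HomStarOp 𝒜 K) (B : FractionalIdeal (nonZeroDivisors R) K) (x : K) :
    x ∈ eStarSub 𝒜 K s B ↔ ∀ z : K, z ≠ 0 → spanSingleton (nonZeroDivisors R) z * B ≤ 1 →
      x ∈ spanSingleton (nonZeroDivisors R) z⁻¹ *
        s.toFun (Cfrac 𝒜 K (spanSingleton (nonZeroDivisors R) z * B)) := by
  rw [eStarSub]
  simp only [Submodule.mem_iInf, Set.mem_setOf_eq]
  constructor
  · intro h z hz hle
    exact h z ⟨hz, hle⟩
  · rintro h z ⟨hz, hle⟩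
    exact h z hz hle

lemma mem_eStar_iff (s : HomStarOp 𝒜 K) {B : FractionalIdeal (nonZeroDivisors R) K}
    (hex : ∃ z : K, z ≠ 0 ∧ spanSingleton (nonZeroDivisors R) z * B ≤ 1) (x : K) :
    x ∈ eStar 𝒜 K s B ↔ x ∈ eStarSub 𝒜 K s B := by
  have hfr : IsFractional (nonZeroDivisors R) (eStarSub 𝒜 K s B) := by
    obtain ⟨z, hz, hle⟩ := hex
    have hle2 : eStarSub 𝒜 K s B ≤
        ↑(spanSingleton (nonZeroDivisors R) z⁻¹ *
          s.toFun (Cfrac 𝒜 K (spanSingleton (nonZeroDivisors R) z * B))) := by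
      intro y hy
      exact (mem_eStarSub_iff 𝒜 K s B y).1 hy z hz hle
    obtain ⟨d, hd, hint⟩ := (spanSingleton (nonZeroDivisors R) z⁻¹ *
          s.toFun (Cfrac 𝒜 K (spanSingleton (nonZeroDivisors R) z * B))).isFractional
    exact ⟨d, hd, fun b hb => hint b (hle2 hb)⟩
  have heS : eStar 𝒜 K s B = ⟨_, hfr⟩ := dif_pos hfr
  rw [heS]
  rfl



lemma mem_of_mem_coe {D : FractionalIdeal (nonZeroDivisors R) K} {x : K}
    (h : x ∈ (D : Submodule R K)) : x ∈ D := h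

/-- The key lemma: for homogeneous `B` and any admissible `z`, `z ⋆(B) ⊆ ⋆(C(zB))`. -/
lemma star_smul_le (s : HomStarOp 𝒜 K) {B : FractionalIdeal (nonZeroDivisors R) K}
    (hB : B ≠ 0) (hhom : IsHomFrac 𝒜 K B) {z : K} (hz : z ≠ 0)
    (hle : spanSingleton (nonZeroDivisors R) z * B ≤ 1) {x : K} (hx : x ∈ s.toFun B) :
    z * x ∈ s.toFun (Cfrac 𝒜 K (spanSingleton (nonZeroDivisors R) z * B)) := by
  classical
  set D := Cfrac 𝒜 K (spanSingleton (nonZeroDivisors R) z * B) with hD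
  have hD0 : D ≠ 0 := Cfrac_ne_zero 𝒜 K hz hB
  have hDhom : IsHomFrac 𝒜 K D := isHomFrac_Cfrac 𝒜 K _
  obtain ⟨a, haB, ha0, haH⟩ := exists_hom_elem 𝒜 K hB hhom
  have hza : z * a ∈ (1 : FractionalIdeal (nonZeroDivisors R) K) :=
    hle (FractionalIdeal.mem_singleton_mul.2 ⟨a, haB, rfl⟩)
  obtain ⟨f₀, hf₀⟩ := (FractionalIdeal.mem_one_iff _).1 hza
  set c : Γ → K := fun γ => algebraMap R K (GradedRing.proj 𝒜 γ f₀) * a⁻¹ with hcdef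
  obtain ⟨pa, qa, hpaH, hqaH, hqa0, hapq⟩ := haH
  have hpa0 : pa ≠ 0 := by
    rintro rfl
    rw [_root_.map_zero] at hapq
    exact ha0 ((mul_eq_zero.1 hapq).resolve_right (algebraMap_ne_zero K hqa0))
  obtain ⟨dpa, hdpa⟩ := hpaH
  obtain ⟨dqa, hdqa⟩ := hqaH
  -- the claim for homogeneous elements `y`
  have claimhom : ∀ γ : Γ, GradedRing.proj 𝒜 γ f₀ ≠ 0 →
      ∀ y ∈ B, IsHomElem 𝒜 K y → c γ * y ∈ D := by
    intro γ hu0 y hyB hyH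
    by_cases hy0 : y = 0
    · rw [hy0, mul_zero]
      exact FractionalIdeal.zero_mem _
    obtain ⟨h, q, hhH, hqH, hq0, hyq⟩ := hyH
    have hh0 : h ≠ 0 := by
      rintro rfl
      rw [_root_.map_zero] at hyq
      exact hy0 ((mul_eq_zero.1 hyq).resolve_right (algebraMap_ne_zero K hq0))
    obtain ⟨dh, hdh⟩ := hhH
    obtain ⟨dq, hdq⟩ := hqH
    -- w : the integral element corresponding to z * y
    have hzy : z * y ∈ (1 : FractionalIdeal (nonZeroDivisors R) K) :=
      hle (FractionalIdeal.mem_singleton_mul.2 ⟨y, hyB, rfl⟩)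
    obtain ⟨w, hw⟩ := (FractionalIdeal.mem_one_iff _).1 hzy
    have hwI : w ∈ idealOf K (spanSingleton (nonZeroDivisors R) z * B) := by
      rw [mem_idealOf, hw]
      exact FractionalIdeal.mem_singleton_mul.2 ⟨y, hyB, rfl⟩
    -- main identity in R
    have heq : f₀ * (h * qa) = (pa * q) * w := by
      apply IsFractionRing.injective R K
      rw [_root_.map_mul, _root_.map_mul, _root_.map_mul, _root_.map_mul,
        hf₀, ← hapq, ← hyq, hw]
      ring
    set u := GradedRing.proj 𝒜 γ f₀ with hu
    have hproj : u * (h * qa) = GradedRing.proj 𝒜 (γ + (dh + dqa)) (f₀ * (h * qa)) := by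
      rw [GradedRing.proj_apply,
        DirectSum.coe_decompose_mul_add_of_right_mem 𝒜 (SetLike.mul_mem_graded hdh hdqa)]
      rw [hu, GradedRing.proj_apply]
    have hne : GradedRing.proj 𝒜 (γ + (dh + dqa)) ((pa * q) * w) ≠ 0 := by
      rw [← heq, ← hproj]
      exact mul_ne_zero hu0 (mul_ne_zero hh0 hqa0)
    have hvmem : pa * q ∈ 𝒜 (dpa + dq) := SetLike.mul_mem_graded hdpa hdq
    have hδex : ∃ δ : Γ, γ + (dh + dqa) = (dpa + dq) + δ := by
      by_contra hcon
      push_neg at hcon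
      exact hne (proj_mul_eq_zero_of_ne 𝒜 hvmem w _ hcon)
    obtain ⟨δ, hδ⟩ := hδex
    have hkey : u * (h * qa) = (pa * q) * GradedRing.proj 𝒜 δ w := by
      rw [hproj, heq, hδ, GradedRing.proj_apply, GradedRing.proj_apply,
        DirectSum.coe_decompose_mul_add_of_left_mem 𝒜 hvmem]
    set wδ := GradedRing.proj 𝒜 δ w with hwδ
    have hwδmem : wδ ∈ homC 𝒜 (idealOf K (spanSingleton (nonZeroDivisors R) z * B)) :=
      Ideal.subset_span ⟨w, hwI, δ, rfl⟩
    have hmemD : algebraMap R K wδ ∈ D := by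
      rw [hD, Cfrac]
      exact (FractionalIdeal.mem_coeIdeal _).2 ⟨wδ, hwδmem, rfl⟩
    have hgoal : c γ * y = algebraMap R K wδ := by
      have hpq0 : algebraMap R K pa * algebraMap R K q ≠ 0 :=
        mul_ne_zero (algebraMap_ne_zero K hpa0) (algebraMap_ne_zero K hq0)
      apply mul_right_cancel₀ hpq0
      have ha' : a⁻¹ * algebraMap R K pa = algebraMap R K qa := by
        rw [← hapq]
        field_simp
      calc c γ * y * (algebraMap R K pa * algebraMap R K q)
          = algebraMap R K u * (a⁻¹ * algebraMap R K pa) * (y * algebraMap R K q) := by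
            rw [hcdef]; ring
        _ = algebraMap R K u * algebraMap R K qa * algebraMap R K h := by rw [ha', hyq]
        _ = algebraMap R K (u * (h * qa)) := by
            rw [_root_.map_mul, _root_.map_mul]; ring
        _ = algebraMap R K ((pa * q) * wδ) := by rw [hkey]
        _ = algebraMap R K wδ * (algebraMap R K pa * algebraMap R K q) := by
            rw [_root_.map_mul, _root_.map_mul]; ring
    rw [hgoal]
    exact hmemD
  -- the claim for all elements `y ∈ B`
  have claim1 : ∀ γ : Γ, ∀ y ∈ B, c γ * y ∈ D := by
    intro γ y hyB
    by_cases hu0 : GradedRing.proj 𝒜 γ f₀ = 0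
    · have : c γ = 0 := by rw [hcdef]; simp [hu0]
      rw [this, zero_mul]
      exact FractionalIdeal.zero_mem _
    obtain ⟨T, g, hg, rfl⟩ := exists_sum_hom_elems 𝒜 K hhom hyB
    rw [Finset.mul_sum]
    refine mem_of_mem_coe K (Submodule.sum_mem _ fun δ hδ => ?_)
    exact claimhom γ hu0 (g δ) (hg δ hδ).1 (hg δ hδ).2
  -- now assemble
  have hzsum : z = ∑ γ ∈ (DirectSum.decompose 𝒜 f₀).support, c γ := by
    have hz' : z = algebraMap R K f₀ * a⁻¹ := by
      rw [hf₀]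
      field_simp
    rw [hz', hcdef, ← Finset.sum_mul]
    congr 1
    rw [← _root_.map_sum]
    congr 1
    exact (DirectSum.sum_support_decompose 𝒜 f₀).symm
  rw [hzsum, Finset.sum_mul]
  refine mem_of_mem_coe K (Submodule.sum_mem _ fun γ hγ => ?_)
  have hu0 : GradedRing.proj 𝒜 γ f₀ ≠ 0 := (GradedRing.mem_support_iff 𝒜 f₀ γ).1 hγ
  have hc0 : c γ ≠ 0 := mul_ne_zero (algebraMap_ne_zero K hu0) (inv_ne_zero ha0)
  have hcH : IsHomElem 𝒜 K (c γ) :=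
    IsHomElem.mul 𝒜 K
      (isHomElem_algebraMap 𝒜 K ⟨γ, by rw [GradedRing.proj_apply]; exact (decompose 𝒜 f₀ γ).2⟩)
      (IsHomElem.inv 𝒜 K ha0 ⟨pa, qa, ⟨dpa, hdpa⟩, ⟨dqa, hdqa⟩, hqa0, hapq⟩)
  have hle' : spanSingleton (nonZeroDivisors R) (c γ) * B ≤ D := by
    intro e he
    obtain ⟨y, hyB, rfl⟩ := FractionalIdeal.mem_singleton_mul.1 he
    exact claim1 γ y hyB
  have hne : spanSingleton (nonZeroDivisors R) (c γ) * B ≠ 0 :=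
    spanSingleton_mul_ne_zero K hc0 hB
  have hhom' : IsHomFrac 𝒜 K (spanSingleton (nonZeroDivisors R) (c γ) * B) :=
    IsHomFrac.smul 𝒜 K hc0 hcH hhom
  have hstar : s.toFun (spanSingleton (nonZeroDivisors R) (c γ) * B) ≤ s.toFun D :=
    s.mono _ _ hne hD0 hhom' hDhom hle'
  have hmem : c γ * x ∈ spanSingleton (nonZeroDivisors R) (c γ) * s.toFun B :=
    FractionalIdeal.mem_singleton_mul.2 ⟨x, hx, rfl⟩
  rw [← s.map_smul (c γ) hc0 hcH B hB hhom] at hmem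
  exact hstar hmem



lemma spanSingleton_mul_mono {x : K} {B C : FractionalIdeal (nonZeroDivisors R) K}
    (h : B ≤ C) : spanSingleton (nonZeroDivisors R) x * B ≤
      spanSingleton (nonZeroDivisors R) x * C := by
  intro e he
  obtain ⟨y, hyB, rfl⟩ := FractionalIdeal.mem_singleton_mul.1 he
  exact FractionalIdeal.mem_singleton_mul.2 ⟨y, h hyB, rfl⟩

lemma linearMap_injective : Function.Injective ⇑(Algebra.linearMap R K) := fun a b h =>
  IsFractionRing.injective R K (by simpa using h)

lemma idealOf_fg {J : FractionalIdeal (nonZeroDivisors R) K} (hJ : J ≤ 1)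
    (hfg : (J : Submodule R K).FG) : (idealOf K J).FG := by
  apply Submodule.fg_of_fg_map_injective (Algebra.linearMap R K) (linearMap_injective K)
  have : Submodule.map (Algebra.linearMap R K) (idealOf K J)
      = ((↑(idealOf K J) : FractionalIdeal (nonZeroDivisors R) K) : Submodule R K) := by
    rw [FractionalIdeal.coe_coeIdeal]; rfl
  rw [this, coeIdeal_idealOf K hJ]
  exact hfg

lemma coeIdeal_fg {I : Ideal R} (hI : I.FG) :
    (((I : FractionalIdeal (nonZeroDivisors R) K)) : Submodule R K).FG := by
  rw [FractionalIdeal.coe_coeIdeal]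
  exact Submodule.FG.map _ hI

end Helpers

/-- `(e(⋆))_f` agrees with `⋆_f` on nonzero homogeneous fractional ideals. -/
theorem stmt_6
    {Γ : Type*} [AddCommMonoid Γ] [LinearOrder Γ] [IsOrderedCancelAddMonoid Γ] [DecidableEq Γ]
    {R : Type*} [CommRing R] [IsDomain R]
    (𝒜 : Γ → AddSubgroup R) [GradedRing 𝒜]
    (K : Type*) [Field K] [Algebra R K] [IsFractionRing R K]
    (s : HomStarOp 𝒜 K) (A : FractionalIdeal (nonZeroDivisors R) K)
    (hA : A ≠ 0) (hhom : IsHomFrac 𝒜 K A) :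
    finTypeSet K (eStar 𝒜 K s) A = homFinTypeSet 𝒜 K s.toFun A := by
  ext x
  simp only [finTypeSet, homFinTypeSet, Set.mem_iUnion, Set.mem_setOf_eq, exists_prop]
  constructor
  · rintro ⟨B, ⟨hB0, hBA, hBfg⟩, hx⟩
    obtain ⟨t, ht0, htH, htle, htI⟩ := hhom
    set z : K := algebraMap R K t with hzdef
    have hz : z ≠ 0 := algebraMap_ne_zero K ht0
    have hzB : spanSingleton (nonZeroDivisors R) z * B ≤ 1 :=
      le_trans (spanSingleton_mul_mono K hBA) htle
    set D := Cfrac 𝒜 K (spanSingleton (nonZeroDivisors R) z * B) with hDdef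
    have hD0 : D ≠ 0 := Cfrac_ne_zero 𝒜 K hz hB0
    have hDhom := isHomFrac_Cfrac 𝒜 K (spanSingleton (nonZeroDivisors R) z * B)
    have hDle1 : D ≤ 1 := Cfrac_le_one 𝒜 K _
    set B' := spanSingleton (nonZeroDivisors R) z⁻¹ * D with hB'def
    have hzinv : z⁻¹ ≠ 0 := inv_ne_zero hz
    have hzinvH : IsHomElem 𝒜 K z⁻¹ := IsHomElem.inv 𝒜 K hz (isHomElem_algebraMap 𝒜 K htH)
    have hxmem : x ∈ spanSingleton (nonZeroDivisors R) z⁻¹ * s.toFun D := by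
      have h1 := (mem_eStar_iff 𝒜 K s ⟨z, hz, hzB⟩ x).1 hx
      exact (mem_eStarSub_iff 𝒜 K s B x).1 h1 z hz hzB
    have hB'0 : B' ≠ 0 := spanSingleton_mul_ne_zero K hzinv hD0
    have hmono : spanSingleton (nonZeroDivisors R) z * B ≤ spanSingleton (nonZeroDivisors R) z * A :=
      spanSingleton_mul_mono K hBA
    have h1 : idealOf K (spanSingleton (nonZeroDivisors R) z * B) ≤
        idealOf K (spanSingleton (nonZeroDivisors R) z * A) :=
      fun r hr => (mem_idealOf K).2 (hmono ((mem_idealOf K).1 hr))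
    have hB'A : B' ≤ A := by
      have h2 : homC 𝒜 (idealOf K (spanSingleton (nonZeroDivisors R) z * B)) ≤
          idealOf K (spanSingleton (nonZeroDivisors R) z * A) := homC_le 𝒜 h1 htI
      have h3 : D ≤ spanSingleton (nonZeroDivisors R) z * A := by
        rw [hDdef, Cfrac]
        calc (↑(homC 𝒜 (idealOf K (spanSingleton (nonZeroDivisors R) z * B))) :
              FractionalIdeal (nonZeroDivisors R) K)
            ≤ ↑(idealOf K (spanSingleton (nonZeroDivisors R) z * A)) :=
              (FractionalIdeal.coeIdeal_le_coeIdeal K).2 h2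
          _ = spanSingleton (nonZeroDivisors R) z * A := coeIdeal_idealOf K htle
      calc B' ≤ spanSingleton (nonZeroDivisors R) z⁻¹ * (spanSingleton (nonZeroDivisors R) z * A) :=
            spanSingleton_mul_mono K h3
        _ = A := by
            rw [← mul_assoc, spanSingleton_mul_spanSingleton, inv_mul_cancel₀ hz,
              spanSingleton_one, one_mul]
    have he : spanSingleton (nonZeroDivisors R) z * B' = D := by
      rw [hB'def, ← mul_assoc, spanSingleton_mul_spanSingleton, mul_inv_cancel₀ hz,
        spanSingleton_one, one_mul]
    have hB'hom : IsHomFrac 𝒜 K B' := by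
      refine ⟨t, ht0, htH, ?_, ?_⟩
      · rw [← hzdef, he]; exact hDle1
      · rw [← hzdef, he, hDdef, Cfrac, idealOf_coeIdeal]
        exact isHomIdeal_homC 𝒜 _
    have hB'fg : (B' : Submodule R K).FG := by
      have hzBfg : ((spanSingleton (nonZeroDivisors R) z * B :
          FractionalIdeal (nonZeroDivisors R) K) : Submodule R K).FG := by
        rw [FractionalIdeal.coe_mul]
        refine Submodule.FG.mul ?_ hBfg
        rw [FractionalIdeal.coe_spanSingleton]
        exact Submodule.fg_span_singleton z
      have hIfg : (idealOf K (spanSingleton (nonZeroDivisors R) z * B)).FG :=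
        idealOf_fg K hzB hzBfg
      have hDfg : (D : Submodule R K).FG := by
        rw [hDdef, Cfrac]
        exact coeIdeal_fg K (homC_fg 𝒜 hIfg)
      rw [hB'def, FractionalIdeal.coe_mul]
      refine Submodule.FG.mul ?_ hDfg
      rw [FractionalIdeal.coe_spanSingleton]
      exact Submodule.fg_span_singleton _
    have hxB' : x ∈ s.toFun B' := by
      rw [hB'def, s.map_smul z⁻¹ hzinv hzinvH D hD0 hDhom]
      exact hxmem
    exact ⟨B', ⟨hB'0, hB'A, hB'hom, hB'fg⟩, hxB'⟩
  · rintro ⟨B, ⟨hB0, hBA, hBhom, hBfg⟩, hx⟩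
    refine ⟨B, ⟨hB0, hBA, hBfg⟩, ?_⟩
    have hex : ∃ z : K, z ≠ 0 ∧ spanSingleton (nonZeroDivisors R) z * B ≤ 1 := by
      obtain ⟨t, ht0, htH, htle, _⟩ := hBhom
      exact ⟨algebraMap R K t, algebraMap_ne_zero K ht0, htle⟩
    rw [mem_eStar_iff 𝒜 K s hex x, mem_eStarSub_iff]
    intro z hz hzle
    refine FractionalIdeal.mem_singleton_mul.2
      ⟨z * x, star_smul_le 𝒜 K s hB0 hBhom hz hzle hx, ?_⟩
    rw [← mul_assoc, inv_mul_cancel₀ hz, one_mul]
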